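/- arXiv:0910.1119 — 2 statements merged into one kernel-verified Lean document; each statement's English description precedes it below -/
import Mathlib

section
/- (Proposition 3: robustness.) Assume X has full column rank p, and there exist c < ℓₙ(0) and c₀ > 0 such that min over β ∈ L_c of λ_min[n⁻¹XᵀΣ(Xβ)X] is at least c₀, and let β* denote the unique global maximizer of ℓₙ (assumed to exist). If β̂ = (β̂₁,…,β̂_p)ᵀ is a local maximizer of the SCAD-penalized likelihood Qₙ with β̂ ∈ L_c and min_{1≤j≤p} |β̂_j| > (a + 1/(2c₀))λₙ, then β̂ is the global maximizer of Qₙ on ℝᵖ and β̂ = β*. -/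
open Matrix Set

noncomputable section

/-- GLM log-likelihood `ℓₙ(β) = n⁻¹[yᵀXβ − Σᵢ b((Xβ)ᵢ)]`. -/
def ell (n p : ℕ) (X : Matrix (Fin n) (Fin p) ℝ) (y : Fin n → ℝ) (b : ℝ → ℝ)
    (β : Fin p → ℝ) : ℝ :=
  (n : ℝ)⁻¹ * ((∑ i, y i * X.mulVec β i) - ∑ i, b (X.mulVec β i))

/-- `Σ(θ) = diag{b″(θ₁),…,b″(θₙ)}`. -/
def SigM (n : ℕ) (b : ℝ → ℝ) (θ : Fin n → ℝ) : Matrix (Fin n) (Fin n) ℝ :=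
  Matrix.diagonal fun i => iteratedDeriv 2 b (θ i)

/-- Smallest eigenvalue of a symmetric real matrix, via the Rayleigh quotient on the unit
sphere. -/
def lambdaMin {ι : Type} [Fintype ι] (M : Matrix ι ι ℝ) : ℝ :=
  sInf {r : ℝ | ∃ v : ι → ℝ, (∑ i, (v i) ^ 2) = 1 ∧ r = v ⬝ᵥ M.mulVec v}

/-- Derivative of the SCAD penalty: `p_λ′(u) = λ[1{u ≤ λ} + (aλ−u)₊/((a−1)λ)·1{u > λ}]`. -/
def scadDeriv (l a u : ℝ) : ℝ :=
  l * ((if u ≤ l then 1 else 0) + max (a * l - u) 0 / ((a - 1) * l) * (if l < u then 1 else 0))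

/-- The SCAD penalty `p_λ(t) = ∫₀ᵗ p_λ′(u) du`. -/
def scad (l a t : ℝ) : ℝ := ∫ u in (0:ℝ)..t, scadDeriv l a u

/-- SCAD-penalized likelihood `Qₙ(β) = ℓₙ(β) − Σⱼ p_{λₙ}(|βⱼ|)`. -/
def Qscad (n p : ℕ) (X : Matrix (Fin n) (Fin p) ℝ) (y : Fin n → ℝ) (b : ℝ → ℝ)
    (lam a : ℝ) (β : Fin p → ℝ) : ℝ :=
  ell n p X y b β - ∑ j, scad lam a |β j|

section ScadLemmas
variable {l a : ℝ}


lemma scadDeriv_nonneg (hl : 0 < l) (ha : 2 < a) (u : ℝ) : 0 ≤ scadDeriv l a u := by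
  unfold scadDeriv
  have h1 : (0:ℝ) < (a - 1) * l := by nlinarith
  positivity

lemma scadDeriv_le (hl : 0 < l) (ha : 2 < a) (u : ℝ) : scadDeriv l a u ≤ l := by
  unfold scadDeriv
  have h1 : (0:ℝ) < (a - 1) * l := by nlinarith
  by_cases h : u ≤ l
  · rw [if_pos h, if_neg (not_lt.2 h)]
    ring_nf
    nlinarith
  · rw [if_neg h, if_pos (not_le.1 h)]
    push_neg at h
    have h2 : max (a * l - u) 0 ≤ (a - 1) * l := by
      rcases max_cases (a * l - u) 0 with ⟨he, _⟩ | ⟨he, _⟩ <;> rw [he] <;> nlinarith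
    have h3 : max (a * l - u) 0 / ((a - 1) * l) ≤ 1 := by
      rw [div_le_one h1]; exact h2
    nlinarith [div_nonneg (le_max_right (a*l-u) 0) h1.le]

lemma scadDeriv_eq_zero (hl : 0 < l) (ha : 2 < a) {u : ℝ} (hu : a * l ≤ u) :
    scadDeriv l a u = 0 := by
  have h1 : l < u := by nlinarith
  unfold scadDeriv
  rw [if_neg (not_le.2 h1), if_pos h1, max_eq_right (by linarith)]
  simp

lemma scadDeriv_measurable (l a : ℝ) : Measurable (scadDeriv l a) := by
  unfold scadDeriv
  apply Measurable.const_mul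
  apply Measurable.add
  · exact Measurable.ite measurableSet_Iic measurable_const measurable_const
  · apply Measurable.mul
    · apply Measurable.div _ measurable_const
      exact (measurable_const.sub measurable_id).max measurable_const
    · exact Measurable.ite measurableSet_Ioi measurable_const measurable_const

lemma scadDeriv_intervalIntegrable (hl : 0 < l) (ha : 2 < a) (s t : ℝ) :
    IntervalIntegrable (scadDeriv l a) MeasureTheory.volume s t := by
  rw [intervalIntegrable_iff]
  apply MeasureTheory.Integrable.mono' (g := fun _ => l)
  · exact MeasureTheory.integrableOn_const measure_Ioc_lt_top.ne
  · exact (scadDeriv_measurable l a).aestronglyMeasurable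
  · filter_upwards with u
    rw [Real.norm_eq_abs, abs_of_nonneg (scadDeriv_nonneg hl ha u)]
    exact scadDeriv_le hl ha u

lemma scad_sub (hl : 0 < l) (ha : 2 < a) (s t : ℝ) :
    scad l a t - scad l a s = ∫ u in s..t, scadDeriv l a u := by
  unfold scad
  rw [← intervalIntegral.integral_add_adjacent_intervals
    (scadDeriv_intervalIntegrable hl ha 0 s) (scadDeriv_intervalIntegrable hl ha s t)]
  ring

lemma scad_diff_nonneg (hl : 0 < l) (ha : 2 < a) {s t : ℝ} (hst : s ≤ t) :
    0 ≤ scad l a t - scad l a s := by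
  rw [scad_sub hl ha]
  exact intervalIntegral.integral_nonneg hst (fun u _ => scadDeriv_nonneg hl ha u)

lemma scad_diff_le (hl : 0 < l) (ha : 2 < a) {s t : ℝ} (hst : s ≤ t) :
    scad l a t - scad l a s ≤ l * (t - s) := by
  rw [scad_sub hl ha]
  calc ∫ u in s..t, scadDeriv l a u ≤ ∫ _ in s..t, l := by
        apply intervalIntegral.integral_mono_on hst (scadDeriv_intervalIntegrable hl ha s t)
          intervalIntegrable_const
        exact fun u _ => scadDeriv_le hl ha u
    _ = l * (t - s) := by simp [mul_comm]

lemma scad_const_after (hl : 0 < l) (ha : 2 < a) {t : ℝ} (ht : a * l ≤ t) :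
    scad l a t = scad l a (a * l) := by
  have h : scad l a t - scad l a (a * l) = 0 := by
    rw [scad_sub hl ha]
    rw [intervalIntegral.integral_congr (g := fun _ => 0)]
    · simp
    · intro u hu
      rw [uIcc_of_le ht] at hu
      exact scadDeriv_eq_zero hl ha hu.1
  linarith

lemma scad_nonneg (hl : 0 < l) (ha : 2 < a) {t : ℝ} (ht : 0 ≤ t) : 0 ≤ scad l a t := by
  have := scad_diff_nonneg hl ha ht
  unfold scad at this ⊢
  simpa using this

lemma scad_diff_le_max (hl : 0 < l) (ha : 2 < a) {s t : ℝ} (hst : s ≤ t) :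
    scad l a t - scad l a s ≤ l * max (a * l - s) 0 := by
  by_cases h : a * l ≤ s
  · have h2 : scad l a t = scad l a s := by
      rw [scad_const_after hl ha (le_trans h hst), scad_const_after hl ha h]
    rw [h2]
    simp
    positivity
  · push_neg at h
    set t3 := min t (a * l) with ht3
    have h1 : s ≤ t3 := le_min hst h.le
    have h2 : scad l a t = scad l a t3 := by
      rw [ht3]
      by_cases h4 : t ≤ a * l
      · rw [min_eq_left h4]
      · push_neg at h4
        rw [min_eq_right h4.le, scad_const_after hl ha h4.le]
    rw [h2]
    calc scad l a t3 - scad l a s ≤ l * (t3 - s) := scad_diff_le hl ha h1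
      _ ≤ l * (a * l - s) := by
          apply mul_le_mul_of_nonneg_left _ hl.le
          have : t3 ≤ a * l := min_le_right _ _
          linarith
      _ ≤ l * max (a * l - s) 0 := mul_le_mul_of_nonneg_left (le_max_left _ _) hl.le

lemma scad_zero (l a : ℝ) : scad l a 0 = 0 := by unfold scad; simp

/-- L14 -/
lemma scad_le_quad {c₀ : ℝ} (hl : 0 < l) (ha : 2 < a) (hc₀ : 0 < c₀) {sb : ℝ}
    (hsb : (a + 1 / (2 * c₀)) * l < sb) : scad l a sb ≤ c₀ / 2 * sb ^ 2 := by
  have hal : a * l ≤ sb := by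
    have : 0 < 1 / (2 * c₀) * l := by positivity
    nlinarith
  have h1 : scad l a sb = scad l a (a * l) := scad_const_after hl ha hal
  have h2 : scad l a (a * l) ≤ l * (a * l) := by
    have := scad_diff_le hl ha (s := 0) (t := a * l) (by nlinarith)
    rw [scad_zero] at this; linarith
  rw [h1]
  have hsb0 : 0 < sb := lt_of_lt_of_le (by nlinarith) hal
  have key : a * l ^ 2 ≤ c₀ / 2 * ((a + 1 / (2 * c₀)) * l) ^ 2 := by
    have h4 : c₀ / 2 * ((a + 1 / (2 * c₀)) * l) ^ 2 - a * l ^ 2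
        = l ^ 2 / (8 * c₀) * (2 * c₀ * a - 1) ^ 2 := by
      field_simp
      ring
    have h7 : 0 ≤ l ^ 2 / (8 * c₀) * (2 * c₀ * a - 1) ^ 2 := by positivity
    linarith
  have h5 : c₀ / 2 * ((a + 1 / (2 * c₀)) * l) ^ 2 ≤ c₀ / 2 * sb ^ 2 := by
    have h6 : 0 ≤ (a + 1 / (2 * c₀)) * l := by positivity
    have h8 := pow_le_pow_left₀ h6 hsb.le 2
    nlinarith
  nlinarith

/-- L13 -/
lemma scad_saving_le (hl : 0 < l) (ha : 2 < a) {c₀ : ℝ} (hc₀ : 0 < c₀) {sb s t : ℝ}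
    (hsb : (a + 1 / (2 * c₀)) * l < sb) (hs : 0 ≤ s) (ht : |sb - s| ≤ t) :
    scad l a sb - scad l a s ≤ c₀ / 2 * t ^ 2 := by
  have ht0 : 0 ≤ t := le_trans (abs_nonneg _) ht
  rcases le_or_gt sb s with h | h
  · have := scad_diff_nonneg hl ha h
    nlinarith
  · have hd := scad_diff_le_max hl ha h.le
    rcases le_or_gt (a * l - s) 0 with h2 | h2
    · rw [max_eq_right h2] at hd
      nlinarith
    · rw [max_eq_left h2.le] at hd
      have h3 : sb - s ≤ t := le_trans (le_abs_self _) ht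
      -- a*l - s ≤ (sb - l/(2c₀)) - s ≤ t - l/(2c₀)
      have h4 : a * l - s ≤ t - 1 / (2 * c₀) * l := by nlinarith [div_pos one_pos (mul_pos two_pos hc₀)]
      have h5 : l * (a * l - s) ≤ l * t - l ^ 2 / (2 * c₀) := by
        have := mul_le_mul_of_nonneg_left h4 hl.le
        calc l * (a * l - s) ≤ l * (t - 1 / (2 * c₀) * l) := this
          _ = l * t - l ^ 2 / (2 * c₀) := by ring
      have h6 : l * t - l ^ 2 / (2 * c₀) ≤ c₀ / 2 * t ^ 2 := by
        have hsq : 0 ≤ (c₀ * t - l) ^ 2 := sq_nonneg _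
        have : c₀ / 2 * t ^ 2 - (l * t - l ^ 2 / (2 * c₀)) = (c₀ * t - l) ^ 2 / (2 * c₀) := by
          field_simp; ring
        nlinarith [div_nonneg hsq (by positivity : (0:ℝ) ≤ 2 * c₀)]
      linarith
  
/-- Rayleigh bound. -/

lemma rayleigh {ι : Type} [Fintype ι] {M : Matrix ι ι ℝ} {c₀ : ℝ} (hc₀ : 0 < c₀)
    (hM : c₀ ≤ lambdaMin M) (v : ι → ℝ) :
    c₀ * (∑ i, v i ^ 2) ≤ v ⬝ᵥ M.mulVec v := by
  set K := ∑ i, v i ^ 2 with hK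
  have hK0 : 0 ≤ K := Finset.sum_nonneg fun i _ => sq_nonneg _
  rcases eq_or_lt_of_le hK0 with h0 | hpos
  · have hv : v = 0 := by
      funext i
      have := (Finset.sum_eq_zero_iff_of_nonneg (fun i _ => sq_nonneg (v i))).1 h0.symm i
        (Finset.mem_univ i)
      exact pow_eq_zero_iff (n := 2) (by norm_num) |>.1 this
    rw [hv, ← h0]
    simp
  · set k := (Real.sqrt K)⁻¹ with hk
    have hsK : 0 < Real.sqrt K := Real.sqrt_pos.2 hpos
    have hk2 : k ^ 2 * K = 1 := by
      rw [hk, inv_pow, Real.sq_sqrt hK0]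
      exact inv_mul_cancel₀ hpos.ne'
    set u := k • v with hu
    have hsum : (∑ i, (u i) ^ 2) = k ^ 2 * K := by
      rw [hK, Finset.mul_sum]
      exact Finset.sum_congr rfl fun i _ => by simp [hu, mul_pow]
    have hle : c₀ ≤ u ⬝ᵥ M.mulVec u := by
      by_cases hbdd : BddBelow {r : ℝ | ∃ v : ι → ℝ, (∑ i, (v i) ^ 2) = 1 ∧ r = v ⬝ᵥ M.mulVec v}
      · exact hM.trans (csInf_le hbdd ⟨u, by rw [hsum, hk2], rfl⟩)
      · exfalso
        rw [lambdaMin, Real.sInf_of_not_bddBelow hbdd] at hM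
        linarith
    have hval : u ⬝ᵥ M.mulVec u = k ^ 2 * (v ⬝ᵥ M.mulVec v) := by
      rw [hu, Matrix.mulVec_smul, smul_dotProduct, dotProduct_smul]
      simp [smul_eq_mul]
      ring
    rw [hval] at hle
    calc c₀ * K ≤ (k ^ 2 * (v ⬝ᵥ M.mulVec v)) * K := mul_le_mul_of_nonneg_right hle hK0
      _ = (v ⬝ᵥ M.mulVec v) * (k ^ 2 * K) := by ring
      _ = v ⬝ᵥ M.mulVec v := by rw [hk2, mul_one]

lemma quadform (n p : ℕ) (X : Matrix (Fin n) (Fin p) ℝ) (d : Fin n → ℝ) (k : ℝ) (v : Fin p → ℝ) :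
    v ⬝ᵥ ((k • (Xᵀ * Matrix.diagonal d * X)).mulVec v)
      = k * ∑ i, d i * (X.mulVec v i) ^ 2 := by
  rw [Matrix.smul_mulVec, dotProduct_smul, smul_eq_mul]
  congr 1
  rw [← Matrix.mulVec_mulVec, ← Matrix.mulVec_mulVec, Matrix.dotProduct_mulVec,
    Matrix.vecMul_transpose]
  simp only [dotProduct, Matrix.mulVec_diagonal]
  exact Finset.sum_congr rfl fun i _ => by ring

/-- Strong concavity along segments: the main analytic lemma. -/
lemma strong_concavity
    (n p : ℕ) (X : Matrix (Fin n) (Fin p) ℝ) (y : Fin n → ℝ) (b : ℝ → ℝ)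
    (hb : ContDiff ℝ 2 b) (hb'' : ∀ t : ℝ, 0 < iteratedDeriv 2 b t)
    (c c₀ : ℝ) (hc₀ : 0 < c₀)
    (hcurv : ∀ β : Fin p → ℝ, c ≤ ell n p X y b β →
      c₀ ≤ lambdaMin ((n : ℝ)⁻¹ • (Xᵀ * SigM n b (X.mulVec β) * X)))
    (β1 : Fin p → ℝ) (hmax : IsLocalMax (ell n p X y b) β1) (hβ1 : c ≤ ell n p X y b β1)
    (β2 : Fin p → ℝ) (hβ2 : c ≤ ell n p X y b β2) :
    ell n p X y b β2 + c₀ / 2 * ∑ j, (β2 j - β1 j) ^ 2 ≤ ell n p X y b β1 := by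
  -- setup
  set v : Fin p → ℝ := fun j => β2 j - β1 j with hv
  set K := ∑ j, v j ^ 2 with hKdef
  have hK0 : 0 ≤ K := Finset.sum_nonneg fun j _ => sq_nonneg _
  set w := X.mulVec v with hw
  set a' := X.mulVec β1 with ha'
  have hline : ∀ t : ℝ, X.mulVec (β1 + t • v) = fun i => a' i + t * w i := by
    intro t
    funext i
    rw [Matrix.mulVec_add, Matrix.mulVec_smul]
    simp [smul_eq_mul]
    rfl
  -- differentiability of b
  have hbdiff : Differentiable ℝ b := hb.differentiable (by norm_num)
  have hb1 : ContDiff ℝ 1 (deriv b) := by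
    have hb2 := hb
    rw [show (2 : WithTop ℕ∞) = 1 + 1 by norm_num, contDiff_succ_iff_deriv] at hb2
    exact hb2.2.2
  have hdb : Differentiable ℝ (deriv b) := (contDiff_one_iff_deriv.mp hb1).1
  have hiter : iteratedDeriv 2 b = deriv (deriv b) := by
    rw [show (2 : ℕ) = 1 + 1 from rfl, iteratedDeriv_succ, iteratedDeriv_one]
  have hderiv2 : ∀ x : ℝ, HasDerivAt (deriv b) (iteratedDeriv 2 b x) x := by
    intro x
    rw [hiter]
    exact (hdb x).hasDerivAt
  -- the function along the segment
  set g : ℝ → ℝ := fun t => ell n p X y b (β1 + t • v) with hg_def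
  have hgeq : g = fun t =>
      (n : ℝ)⁻¹ * ((∑ i, y i * (a' i + t * w i)) - ∑ i, b (a' i + t * w i)) := by
    funext t
    rw [hg_def]
    simp only [ell, hline t]
  set g1 : ℝ → ℝ := fun t =>
      (n : ℝ)⁻¹ * ((∑ i, y i * w i) - ∑ i, deriv b (a' i + t * w i) * w i) with hg1_def
  set g2 : ℝ → ℝ := fun t =>
      (n : ℝ)⁻¹ * (0 - ∑ i, iteratedDeriv 2 b (a' i + t * w i) * w i * w i) with hg2_def
  have haff : ∀ (i : Fin n) (t : ℝ), HasDerivAt (fun s : ℝ => a' i + s * w i) (w i) t := by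
    intro i t
    simpa using ((hasDerivAt_id t).mul_const (w i)).const_add (a' i)
  have hg : ∀ t : ℝ, HasDerivAt g (g1 t) t := by
    intro t
    rw [hgeq, hg1_def]
    apply HasDerivAt.const_mul
    apply HasDerivAt.sub
    · exact HasDerivAt.fun_sum fun i _ => by
        simpa [mul_comm] using (haff i t).const_mul (y i)
    · exact HasDerivAt.fun_sum fun i _ =>
        ((hbdiff _).hasDerivAt.comp t (haff i t))
  have hg1 : ∀ t : ℝ, HasDerivAt g1 (g2 t) t := by
    intro t
    rw [hg1_def, hg2_def]
    apply HasDerivAt.const_mul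
    apply HasDerivAt.sub
    · exact hasDerivAt_const t _
    · exact HasDerivAt.fun_sum fun i _ =>
        ((hderiv2 _).comp t (haff i t)).mul_const (w i)
  -- second derivative bounds
  have hg2val : ∀ t : ℝ, g2 t
      = -(v ⬝ᵥ ((n : ℝ)⁻¹ • (Xᵀ * SigM n b (X.mulVec (β1 + t • v)) * X)).mulVec v) := by
    intro t
    unfold SigM
    rw [quadform]
    simp only [hline t, ← hw]
    show (n : ℝ)⁻¹ * (0 - ∑ i, iteratedDeriv 2 b (a' i + t * w i) * w i * w i) = _
    rw [zero_sub, mul_neg, neg_inj]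
    congr 1
    exact Finset.sum_congr rfl fun i _ => by ring
  have hg2_nonpos : ∀ t : ℝ, g2 t ≤ 0 := by
    intro t
    rw [hg2_def]
    simp only [zero_sub]
    apply mul_nonpos_of_nonneg_of_nonpos
    · positivity
    · rw [neg_nonpos]
      exact Finset.sum_nonneg fun i _ => by nlinarith [hb'' (a' i + t * w i), sq_nonneg (w i)]
  have hg2_le : ∀ t : ℝ, c ≤ ell n p X y b (β1 + t • v) → g2 t ≤ -(c₀ * K) := by
    intro t ht
    rw [hg2val t, neg_le_neg_iff]
    exact rayleigh hc₀ (hcurv _ ht) v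
  -- endpoints
  have hg0 : g 0 = ell n p X y b β1 := by
    show ell n p X y b (β1 + (0:ℝ) • v) = _
    norm_num
  have hg1end : g 1 = ell n p X y b β2 := by
    have h : β1 + (1 : ℝ) • v = β2 := by
      funext j
      simp [hv]
    show ell n p X y b (β1 + (1:ℝ) • v) = _
    rw [h]
  -- concavity of g, to show segment stays in the sublevel set
  have hgdiff : Differentiable ℝ g := fun t => (hg t).differentiableAt
  have hderivg : deriv g = g1 := funext fun t => (hg t).deriv
  have hgconc : ConcaveOn ℝ univ g := by
    apply concaveOn_univ_of_deriv2_nonpos hgdiff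
    · rw [hderivg]
      exact fun t => (hg1 t).differentiableAt
    · intro x
      have : deriv^[2] g x = deriv (deriv g) x := by
        rw [show (2 : ℕ) = 1 + 1 from rfl, Function.iterate_succ, Function.iterate_one]
        rfl
      rw [this, hderivg, (hg1 x).deriv]
      exact hg2_nonpos x
  have hseg : ∀ t ∈ Icc (0:ℝ) 1, c ≤ ell n p X y b (β1 + t • v) := by
    intro t ht
    have h1 : (1 - t) • g 0 + t • g 1 ≤ g ((1 - t) • (0:ℝ) + t • 1) :=
      hgconc.2 (mem_univ (0:ℝ)) (mem_univ (1:ℝ)) (by linarith [ht.2]) ht.1 (by ring)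
    have h2 : (1 - t) • (0:ℝ) + t • (1:ℝ) = t := by simp
    rw [h2] at h1
    have : c ≤ g t := by
      rw [hg0, hg1end] at h1
      simp only [smul_eq_mul] at h1
      nlinarith [ht.1, ht.2]
    rwa [hg_def] at this
  -- derivative at 0 vanishes
  have hlocg : IsLocalMax g 0 := by
    have hcont : Continuous fun t : ℝ => β1 + t • v :=
      continuous_const.add (continuous_id.smul continuous_const)
    have htend : Filter.Tendsto (fun t : ℝ => β1 + t • v) (nhds 0) (nhds β1) := by
      have := hcont.tendsto 0
      simpa using this
    have := htend.eventually hmax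
    exact this.mono fun t ht => le_trans ht (le_of_eq hg0.symm)
  have hg1_0 : g1 0 = 0 := by
    rw [← (hg 0).deriv]
    exact hlocg.deriv_eq_zero
  -- the comparison function D
  set D : ℝ → ℝ := fun t => g 0 + g1 0 * t - c₀ * K / 2 * t ^ 2 - g t with hD_def
  set D1 : ℝ → ℝ := fun t => g1 0 - c₀ * K * t - g1 t with hD1_def
  have hD : ∀ t : ℝ, HasDerivAt D (D1 t) t := by
    intro t
    rw [hD_def, hD1_def]
    have h1 : HasDerivAt (fun s : ℝ => g 0 + g1 0 * s) (g1 0) t := by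
      simpa using ((hasDerivAt_id t).const_mul (g1 0)).const_add (g 0)
    have h2 : HasDerivAt (fun s : ℝ => c₀ * K / 2 * s ^ 2) (c₀ * K * t) t := by
      have := (hasDerivAt_pow 2 t).const_mul (c₀ * K / 2)
      refine this.congr_deriv ?_
      norm_num
      ring
    exact (h1.sub h2).sub (hg t)
  have hD1 : ∀ t : ℝ, HasDerivAt D1 (-(c₀ * K) - g2 t) t := by
    intro t
    rw [hD1_def]
    have h1 : HasDerivAt (fun s : ℝ => g1 0 - c₀ * K * s) (-(c₀ * K)) t := by
      simpa using ((hasDerivAt_id t).const_mul (c₀ * K)).const_sub (g1 0)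
    exact h1.sub (hg1 t)
  have hD1mono : MonotoneOn D1 (Icc (0:ℝ) 1) := by
    apply monotoneOn_of_deriv_nonneg (convex_Icc 0 1)
    · exact fun t _ => (hD1 t).continuousAt.continuousWithinAt
    · intro t ht
      exact (hD1 t).differentiableAt.differentiableWithinAt
    · intro t ht
      rw [interior_Icc] at ht
      rw [(hD1 t).deriv]
      have := hg2_le t (hseg t ⟨ht.1.le, ht.2.le⟩)
      linarith
  have hD1_0 : D1 0 = 0 := by rw [hD1_def]; ring
  have hDmono : MonotoneOn D (Icc (0:ℝ) 1) := by
    apply monotoneOn_of_deriv_nonneg (convex_Icc 0 1)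
    · exact fun t _ => (hD t).continuousAt.continuousWithinAt
    · intro t ht
      exact (hD t).differentiableAt.differentiableWithinAt
    · intro t ht
      rw [interior_Icc] at ht
      rw [(hD t).deriv]
      have := hD1mono (left_mem_Icc.2 zero_le_one) ⟨ht.1.le, ht.2.le⟩ ht.1.le
      rw [hD1_0] at this
      exact this
  have hfin : D 0 ≤ D 1 := hDmono (left_mem_Icc.2 zero_le_one) (right_mem_Icc.2 zero_le_one)
    zero_le_one
  have hD0 : D 0 = 0 := by rw [hD_def]; ring
  have hD1e : D 1 = g 0 + g1 0 - c₀ * K / 2 - g 1 := by rw [hD_def]; ring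
  rw [hD0, hD1e, hg1_0, hg0, hg1end] at hfin
  rw [hKdef, hv] at hfin ⊢
  linarith


end ScadLemmas

/-- Proposition 3 (robustness).  A local maximizer of the SCAD-penalized
likelihood lying in the sublevel set and with all components large is the global maximizer
and coincides with the unpenalized MLE. -/
theorem prop3_robustness
    (n p : ℕ) (hn : 1 ≤ n) (hp : 1 ≤ p)
    (X : Matrix (Fin n) (Fin p) ℝ) (y : Fin n → ℝ)
    (b : ℝ → ℝ) (hb : ContDiff ℝ 2 b) (hb'' : ∀ t : ℝ, 0 < iteratedDeriv 2 b t)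
    (lam a : ℝ) (hlam : 0 < lam) (ha : 2 < a)
    (hrank : X.rank = p)
    (c c₀ : ℝ) (hc : c < ell n p X y b 0) (hc₀ : 0 < c₀)
    (hcurv : ∀ β : Fin p → ℝ, c ≤ ell n p X y b β →
      c₀ ≤ lambdaMin ((n : ℝ)⁻¹ • (Xᵀ * SigM n b (X.mulVec β) * X)))
    (βstar : Fin p → ℝ)
    (hstar : IsMaxOn (ell n p X y b) Set.univ βstar)
    (hstaruniq : ∀ β : Fin p → ℝ, IsMaxOn (ell n p X y b) Set.univ β → β = βstar)
    (βh : Fin p → ℝ)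
    (hloc : IsLocalMax (Qscad n p X y b lam a) βh)
    (hin : c ≤ ell n p X y b βh)
    (hbig : ∀ j : Fin p, (a + 1 / (2 * c₀)) * lam < |βh j|) :
    (∀ β : Fin p → ℝ, Qscad n p X y b lam a β ≤ Qscad n p X y b lam a βh) ∧
    βh = βstar := by
  -- components of βh are beyond the flat region of the penalty
  have hflat : ∀ j : Fin p, a * lam < |βh j| := by
    intro j
    have h1 : 0 < 1 / (2 * c₀) * lam := by positivity
    nlinarith [hbig j]
  -- βh is a local maximizer of the unpenalized likelihood
  have hlocell : IsLocalMax (ell n p X y b) βh := by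
    have hev : ∀ᶠ β in nhds βh, ∀ j : Fin p, a * lam < |β j| := by
      rw [Filter.eventually_all]
      intro j
      exact Filter.Tendsto.eventually_const_lt (hflat j)
        ((continuous_apply j).abs.tendsto βh)
    filter_upwards [hloc, hev] with β hQ hj
    have hpen : ∑ j, scad lam a |β j| = ∑ j, scad lam a |βh j| :=
      Finset.sum_congr rfl fun j _ => by
        rw [scad_const_after hlam ha (hj j).le, scad_const_after hlam ha (hflat j).le]
    unfold Qscad at hQ
    linarith
  -- strong concavity instances
  have SC := strong_concavity n p X y b hb hb'' c c₀ hc₀ hcurv βh hlocell hin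
  have h0 : ell n p X y b 0 + c₀ / 2 * ∑ j, (βh j) ^ 2 ≤ ell n p X y b βh := by
    have := SC 0 hc.le
    simpa using this
  have hsum0 : (0:ℝ) ≤ ∑ j, (βh j) ^ 2 := Finset.sum_nonneg fun j _ => sq_nonneg _
  -- βh is the global maximizer of ℓ
  have hellmax : IsMaxOn (ell n p X y b) Set.univ βh := by
    intro β _
    rcases le_or_gt c (ell n p X y b β) with hβ | hβ
    · have := SC β hβ
      have h2 : (0:ℝ) ≤ ∑ j, (β j - βh j) ^ 2 := Finset.sum_nonneg fun j _ => sq_nonneg _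
      simp only [Set.mem_setOf_eq]
      nlinarith
    · simp only [Set.mem_setOf_eq]
      nlinarith
  refine ⟨?_, hstaruniq βh hellmax⟩
  -- global maximality of Qscad
  intro β
  rcases le_or_gt c (ell n p X y b β) with hβ | hβ
  · have hSC := SC β hβ
    have hpen : ∀ j : Fin p, scad lam a |βh j| - scad lam a |β j|
        ≤ c₀ / 2 * (β j - βh j) ^ 2 := by
      intro j
      have h1 : |(|βh j| - |β j|)| ≤ |β j - βh j| := by
        calc |(|βh j| - |β j|)| ≤ |βh j - β j| := abs_abs_sub_abs_le_abs_sub _ _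
          _ = |β j - βh j| := abs_sub_comm _ _
      have := scad_saving_le hlam ha hc₀ (hbig j) (abs_nonneg (β j)) h1
      rwa [sq_abs] at this
    have hpensum : ∑ j, scad lam a |βh j| - ∑ j, scad lam a |β j|
        ≤ c₀ / 2 * ∑ j, (β j - βh j) ^ 2 := by
      rw [← Finset.sum_sub_distrib, Finset.mul_sum]
      exact Finset.sum_le_sum fun j _ => hpen j
    unfold Qscad
    linarith
  · have hQβ : Qscad n p X y b lam a β ≤ ell n p X y b β := by
      unfold Qscad
      have : (0:ℝ) ≤ ∑ j, scad lam a |β j| :=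
        Finset.sum_nonneg fun j _ => scad_nonneg hlam ha (abs_nonneg _)
      linarith
    have hQβh : ell n p X y b 0 ≤ Qscad n p X y b lam a βh := by
      unfold Qscad
      have hq : ∑ j, scad lam a |βh j| ≤ c₀ / 2 * ∑ j, (βh j) ^ 2 := by
        rw [Finset.mul_sum]
        apply Finset.sum_le_sum
        intro j _
        have := scad_le_quad hlam ha hc₀ (hbig j)
        rwa [sq_abs] at this
      linarith
    linarith

end
end

section
/- (Global maximizers lie in the sublevel set.) Assume X has full column rank p, the penalty p_{λₙ} : [0,∞) → ℝ is increasing with p_{λₙ}(0) = 0, and c < ℓₙ(0). Then for every γ ∈ ℝᵖ with ℓₙ(γ) = c and every t > 1, Qₙ(tγ) < Qₙ(γ). Consequently, every global maximizer of Qₙ over ℝᵖ lies in L_c = {β ∈ ℝᵖ : ℓₙ(β) ≥ c}. -/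
open Matrix Set

noncomputable section

/-- Penalized likelihood `Qₙ(β) = ℓₙ(β) − Σⱼ p_{λₙ}(|βⱼ|)` (here `pen = p_{λₙ}`). -/
def Qn (n p : ℕ) (X : Matrix (Fin n) (Fin p) ℝ) (y : Fin n → ℝ) (b : ℝ → ℝ)
    (pen : ℝ → ℝ) (β : Fin p → ℝ) : ℝ :=
  ell n p X y b β - ∑ j, pen |β j|

/-- global maximizers of the penalized likelihood lie in the sublevel set. -/
theorem global_maximizers_in_sublevel_set
    (n p : ℕ) (hn : 1 ≤ n) (hp : 1 ≤ p)
    (X : Matrix (Fin n) (Fin p) ℝ) (y : Fin n → ℝ)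
    (b : ℝ → ℝ) (hb : ContDiff ℝ 2 b)
    (hb'' : ∀ t : ℝ, 0 < iteratedDeriv 2 b t)
    (hrank : X.rank = p)
    (pen : ℝ → ℝ) (hpen0 : pen 0 = 0) (hpenmono : MonotoneOn pen (Set.Ici 0))
    (c : ℝ) (hc : c < ell n p X y b 0) :
    (∀ g : Fin p → ℝ, ell n p X y b g = c → ∀ t : ℝ, 1 < t →
      Qn n p X y b pen (t • g) < Qn n p X y b pen g) ∧
    (∀ βh : Fin p → ℝ, IsMaxOn (Qn n p X y b pen) Set.univ βh → c ≤ ell n p X y b βh) := by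
  -- Injectivity of `mulVec` from full column rank
  have hinj : Function.Injective X.mulVec := by
    have h := X.mulVecLin.finrank_range_add_finrank_ker
    rw [Matrix.rank] at hrank
    simp only [Module.finrank_fintype_fun_eq_card, Fintype.card_fin] at h
    have hker : Module.finrank ℝ (LinearMap.ker X.mulVecLin) = 0 := by omega
    exact LinearMap.ker_eq_bot.mp (Submodule.finrank_eq_zero.mp hker)
  -- strict convexity of b
  have hsc : StrictConvexOn ℝ Set.univ b :=
    strictConvexOn_of_deriv2_pos convex_univ hb.continuous.continuousOn
      (fun x _ => by simpa [← iteratedDeriv_eq_iterate] using hb'' x)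
  have hcv : ConvexOn ℝ Set.univ b := hsc.convexOn
  have hninv : (0:ℝ) < (n:ℝ)⁻¹ := by positivity
  have part1 : ∀ g : Fin p → ℝ, ell n p X y b g = c → ∀ t : ℝ, 1 < t →
      Qn n p X y b pen (t • g) < Qn n p X y b pen g := by
    intro g hg t ht
    have ht0 : (0:ℝ) < t := by linarith
    set μ : ℝ := t⁻¹ with hμdef
    have hμ0 : 0 < μ := by positivity
    have hμ1 : μ < 1 := by
      rw [hμdef]; exact inv_lt_one_of_one_lt₀ ht
    have hμt : μ * t = 1 := inv_mul_cancel₀ (ne_of_gt ht0)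
    set a : Fin n → ℝ := X.mulVec g with ha
    -- g ≠ 0
    have hgne : g ≠ 0 := by
      intro h0
      rw [h0] at hg
      linarith [hc, hg]
    have hane : ∃ i, a i ≠ 0 := by
      by_contra hall
      push_neg at hall
      exact hgne (hinj (by
        funext i
        simp [← ha, hall i, Matrix.mulVec_zero]))
    obtain ⟨i0, hi0⟩ := hane
    -- per-term inequalities
    have hle : ∀ i ∈ Finset.univ (α := Fin n),
        b (a i) ≤ μ * b (t * a i) + (1 - μ) * b 0 := by
      intro i _
      have := hcv.2 (mem_univ (t * a i)) (mem_univ (0:ℝ)) (le_of_lt hμ0)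
        (by linarith : (0:ℝ) ≤ 1 - μ) (by ring)
      simpa [smul_eq_mul, ← mul_assoc, hμt] using this
    have hlt : b (a i0) < μ * b (t * a i0) + (1 - μ) * b 0 := by
      have hne : t * a i0 ≠ (0:ℝ) := mul_ne_zero (ne_of_gt ht0) hi0
      have := hsc.2 (mem_univ (t * a i0)) (mem_univ (0:ℝ)) hne hμ0
        (by linarith : (0:ℝ) < 1 - μ) (by ring)
      simpa [smul_eq_mul, ← mul_assoc, hμt] using this
    have hsum : (∑ i, b (a i)) < ∑ i, (μ * b (t * a i) + (1 - μ) * b 0) :=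
      Finset.sum_lt_sum hle ⟨i0, Finset.mem_univ i0, hlt⟩
    have hsum' : (∑ i, b (a i)) < μ * (∑ i, b (t * a i)) + (1 - μ) * ∑ _i : Fin n, b 0 := by
      rw [Finset.mul_sum, Finset.mul_sum, ← Finset.sum_add_distrib]
      exact hsum
    -- express ell values
    have hat : X.mulVec (t • g) = fun i => t * a i := by
      funext i; simp [Matrix.mulVec_smul, ← ha, smul_eq_mul]
    have he1 : ell n p X y b g = (n:ℝ)⁻¹ * ((∑ i, y i * a i) - ∑ i, b (a i)) := rfl
    have het : ell n p X y b (t • g)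
        = (n:ℝ)⁻¹ * ((t * ∑ i, y i * a i) - ∑ i, b (t * a i)) := by
      rw [ell, hat]
      congr 1
      rw [Finset.mul_sum]
      congr 1
      exact Finset.sum_congr rfl (fun i _ => by ring)
    have he0 : ell n p X y b 0 = (n:ℝ)⁻¹ * (0 - ∑ _i : Fin n, b 0) := by
      simp [ell, Matrix.mulVec_zero]
    -- key concavity inequality
    have hkey : μ * ell n p X y b (t • g) + (1 - μ) * ell n p X y b 0
        < ell n p X y b g := by
      rw [he1, het, he0]
      have hL : μ * (t * ∑ i, y i * a i) = ∑ i, y i * a i := by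
        rw [← mul_assoc, hμt, one_mul]
      nlinarith [mul_pos hninv (by linarith [hsum'] :
        (0:ℝ) < μ * (∑ i, b (t * a i)) + (1 - μ) * (∑ _i : Fin n, b 0) - ∑ i, b (a i))]
    -- conclude ell (t•g) < ell g
    have h0g : ell n p X y b g < ell n p X y b 0 := by rw [hg]; exact hc
    have helllt : ell n p X y b (t • g) < ell n p X y b g := by
      by_contra hcon
      push_neg at hcon
      nlinarith [hkey, h0g, hμ0, hμ1]
    -- penalty comparison
    have hpen : (∑ j, pen |g j|) ≤ ∑ j, pen |(t • g) j| := by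
      apply Finset.sum_le_sum
      intro j _
      have h1 : |g j| ≤ |(t • g) j| := by
        simp only [Pi.smul_apply, smul_eq_mul, abs_mul, abs_of_pos ht0]
        nlinarith [abs_nonneg (g j)]
      exact hpenmono (Set.mem_Ici.mpr (abs_nonneg (g j))) (Set.mem_Ici.mpr (abs_nonneg _)) h1
    simp only [Qn]
    linarith [helllt, hpen]
  refine ⟨part1, ?_⟩
  intro βh hmax
  by_contra hlt
  push_neg at hlt
  set f : ℝ → ℝ := fun s => ell n p X y b (s • βh) with hf
  set a : Fin n → ℝ := X.mulVec βh with ha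
  have hfc : Continuous f := by
    have hfe : f = fun s => (n:ℝ)⁻¹ * ((∑ i, y i * (s * a i)) - ∑ i, b (s * a i)) := by
      funext s
      simp only [hf, ell]
      congr 1
      · congr 1
        · exact Finset.sum_congr rfl (fun i _ => by
            rw [Matrix.mulVec_smul]; simp [← ha, smul_eq_mul])
        · exact Finset.sum_congr rfl (fun i _ => by
            rw [Matrix.mulVec_smul]; simp [← ha, smul_eq_mul])
    rw [hfe]
    exact continuous_const.mul
      ((continuous_finset_sum _ fun i _ =>
          continuous_const.mul (continuous_id.mul continuous_const)).sub
        (continuous_finset_sum _ fun i _ =>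
          hb.continuous.comp (continuous_id.mul continuous_const)))
  have hf0 : f 0 = ell n p X y b 0 := by simp [hf]
  have hf1 : f 1 = ell n p X y b βh := by simp [hf]
  have hmem : c ∈ Ioo (f 1) (f 0) := by rw [hf0, hf1]; exact ⟨hlt, hc⟩
  have := intermediate_value_Ioo' (le_of_lt one_pos) hfc.continuousOn hmem
  obtain ⟨s, hs, hfs⟩ := this
  have hs0 : (0:ℝ) < s := hs.1
  have ht1 : 1 < s⁻¹ := (one_lt_inv₀ hs0).mpr hs.2
  have happ := part1 (s • βh) hfs s⁻¹ ht1
  have heq : s⁻¹ • s • βh = βh := by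
    rw [smul_smul, inv_mul_cancel₀ (ne_of_gt hs0), one_smul]
  rw [heq] at happ
  exact absurd (hmax (mem_univ (s • βh))) (not_le.mpr happ)

end
end
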